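/- arXiv:1703.05073 — 2 statements merged into one kernel-verified Lean document; each statement's English description precedes it below -/
import Mathlib

section
/- H⁰(tsns, Q) = 0, where Q = (tsns⊗tsns)/H with H = tsns⊗I + I⊗tsns and I the ideal spanned by {Y_p, M_p | p ∈ (1/2)ℤ}: that is, the only element of Q annihilated by the action of every element of tsns is zero. -/
open Finsupp

/-- Basis indices of the twisted `N = 1` Schrödinger–Neveu–Schwarz algebra.
`L n` is `L_n` (`n ∈ ℤ`), `G k` is `G_{k+1/2}` (`k ∈ ℤ`),
`Y k` is `Y_{k/2}` and `M k` is `M_{k/2}` (`k ∈ ℤ`, so `k/2` ranges over `(1/2)ℤ`). -/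
inductive TIdx : Type
  | L : ℤ → TIdx
  | G : ℤ → TIdx
  | Y : ℤ → TIdx
  | M : ℤ → TIdx
  deriving DecidableEq

noncomputable section

/-- The underlying vector space of `tsns`: the free `ℂ`-vector space on the basis. -/
abbrev Tsns : Type := TIdx →₀ ℂ

/-- The basis vectors. -/
def bs (i : TIdx) : Tsns := Finsupp.single i 1

/-- The `ℤ₂`-parity of a basis vector. -/
def parity : TIdx → ZMod 2
  | .L _ => 0
  | .G _ => 1
  | .Y k => (k : ZMod 2)
  | .M k => (k : ZMod 2)

/-- The sign `(-1)^{ab}` for parities `a, b`. -/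
def sg (a b : ZMod 2) : ℂ := if a = 1 ∧ b = 1 then -1 else 1

/-- The super-bracket of `tsns` on basis vectors. -/
def brIdx : TIdx → TIdx → Tsns
  | .L n, .L m => ((m : ℂ) - n) • bs (.L (n + m))
  | .L n, .G k => ((k : ℂ) + 1/2 - n/2) • bs (.G (k + n))
  | .G k, .L n => (-((k : ℂ) + 1/2 - n/2)) • bs (.G (k + n))
  | .L n, .Y k => (if (k : ZMod 2) = 0 then ((k : ℂ) - n)/2 else (k : ℂ)/2) • bs (.Y (k + 2*n))
  | .Y k, .L n => (-(if (k : ZMod 2) = 0 then ((k : ℂ) - n)/2 else (k : ℂ)/2)) • bs (.Y (k + 2*n))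
  | .L n, .M k => (if (k : ZMod 2) = 0 then (k : ℂ)/2 else ((k : ℂ) + n)/2) • bs (.M (k + 2*n))
  | .M k, .L n => (-(if (k : ZMod 2) = 0 then (k : ℂ)/2 else ((k : ℂ) + n)/2)) • bs (.M (k + 2*n))
  | .G k, .G l => (2 : ℂ) • bs (.L (k + l + 1))
  | .G l, .Y k => (if (k : ZMod 2) = 0 then ((k : ℂ) - 2*l - 1)/4 else 2) • bs (.Y (k + 2*l + 1))
  | .Y k, .G l => (if (k : ZMod 2) = 0 then -(((k : ℂ) - 2*l - 1)/4) else 2) • bs (.Y (k + 2*l + 1))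
  | .G l, .M k => (if (k : ZMod 2) = 0 then (k : ℂ)/4 else 2) • bs (.M (k + 2*l + 1))
  | .M k, .G l => (if (k : ZMod 2) = 0 then -((k : ℂ)/4) else 2) • bs (.M (k + 2*l + 1))
  | .Y k, .Y l =>
      (if (k : ZMod 2) = 0 then (if (l : ZMod 2) = 0 then ((l : ℂ) - k)/4 else (l : ℂ)/4)
       else (if (l : ZMod 2) = 0 then -((k : ℂ)/4) else 2)) • bs (.M (k + l))
  | _, _ => 0

/-- The super-bracket of `tsns`, as a bilinear map. -/
def brk : Tsns →ₗ[ℂ] Tsns →ₗ[ℂ] Tsns :=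
  Finsupp.lsum ℂ fun i => LinearMap.toSpanSingleton ℂ _
    (Finsupp.lsum ℂ fun j => LinearMap.toSpanSingleton ℂ Tsns (brIdx i j))

/-- `x` is homogeneous of parity `σ`. -/
def IsHom (σ : ZMod 2) (x : Tsns) : Prop := ∀ i ∈ x.support, parity i = σ

/-- The tensor square `tsns ⊗ tsns`, modelled as the free vector space on pairs
of basis indices. -/
abbrev T2 : Type := (TIdx × TIdx) →₀ ℂ

/-- The tensor cube `tsns ⊗ tsns ⊗ tsns`. -/
abbrev T3 : Type := (TIdx × TIdx × TIdx) →₀ ℂ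

/-- The tensor product map `tsns × tsns → tsns ⊗ tsns`. -/
def tp : Tsns →ₗ[ℂ] Tsns →ₗ[ℂ] T2 :=
  Finsupp.lsum ℂ fun i => LinearMap.toSpanSingleton ℂ _
    (Finsupp.lsum ℂ fun j => LinearMap.toSpanSingleton ℂ T2 (Finsupp.single (i, j) 1))

/-- The tensor product map `tsns × tsns × tsns → tsns ⊗ tsns ⊗ tsns`. -/
def t3 : Tsns →ₗ[ℂ] Tsns →ₗ[ℂ] Tsns →ₗ[ℂ] T3 :=
  Finsupp.lsum ℂ fun i => LinearMap.toSpanSingleton ℂ _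
    (Finsupp.lsum ℂ fun j => LinearMap.toSpanSingleton ℂ _
      (Finsupp.lsum ℂ fun k => LinearMap.toSpanSingleton ℂ T3 (Finsupp.single (i, j, k) 1)))

/-- The adjoint diagonal action of `tsns` on `tsns ⊗ tsns`:
`x ∗ (a ⊗ b) = [x,a] ⊗ b + (-1)^{[x][a]} a ⊗ [x,b]`. -/
def star2 : Tsns →ₗ[ℂ] T2 →ₗ[ℂ] T2 :=
  Finsupp.lsum ℂ fun i => LinearMap.toSpanSingleton ℂ _
    (Finsupp.lsum ℂ fun p => LinearMap.toSpanSingleton ℂ T2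
      (tp (brIdx i p.1) (bs p.2) + sg (parity i) (parity p.1) • tp (bs p.1) (brIdx i p.2)))

/-- The adjoint diagonal action of `tsns` on `tsns ⊗ tsns ⊗ tsns`. -/
def star3 : Tsns →ₗ[ℂ] T3 →ₗ[ℂ] T3 :=
  Finsupp.lsum ℂ fun i => LinearMap.toSpanSingleton ℂ _
    (Finsupp.lsum ℂ fun t => LinearMap.toSpanSingleton ℂ T3
      (t3 (brIdx i t.1) (bs t.2.1) (bs t.2.2)
        + sg (parity i) (parity t.1) • t3 (bs t.1) (brIdx i t.2.1) (bs t.2.2)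
        + (sg (parity i) (parity t.1) * sg (parity i) (parity t.2.1)) •
            t3 (bs t.1) (bs t.2.1) (brIdx i t.2.2)))

/-- The super-twist map `τ(x ⊗ y) = (-1)^{[x][y]} y ⊗ x`. -/
def tau : T2 →ₗ[ℂ] T2 :=
  Finsupp.lsum ℂ fun p => LinearMap.toSpanSingleton ℂ T2
    (sg (parity p.1) (parity p.2) • Finsupp.single (p.2, p.1) 1)

/-- The super-cyclic map `ξ(x₁ ⊗ x₂ ⊗ x₃) = (-1)^{[x₁]([x₂]+[x₃])} x₂ ⊗ x₃ ⊗ x₁`. -/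
def xi : T3 →ₗ[ℂ] T3 :=
  Finsupp.lsum ℂ fun t => LinearMap.toSpanSingleton ℂ T3
    (sg (parity t.1) (parity t.2.1 + parity t.2.2) • Finsupp.single (t.2.1, t.2.2, t.1) 1)

/-- `Im(1⊗1 - τ) ⊆ tsns ⊗ tsns`. -/
def ImSkew : Submodule ℂ T2 := LinearMap.range (LinearMap.id - tau)

/-- `ℂ M₀ ⊗ M₀`, the tensor square of the center. -/
def CC : Submodule ℂ T2 := Submodule.span ℂ {Finsupp.single (TIdx.M 0, TIdx.M 0) 1}

/-- The `(1/2)ℤ`-degree of a basis vector, recorded in half-units (i.e. twice the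
degree, an integer). -/
def hdeg : TIdx → ℤ
  | .L n => 2*n
  | .G k => 2*k + 1
  | .Y k => k
  | .M k => k

/-- The degree (in half-units) of a basis vector of the tensor square. -/
def hdeg2 (p : TIdx × TIdx) : ℤ := hdeg p.1 + hdeg p.2

/-- `d : tsns → tsns ⊗ tsns` is a homogeneous derivation of `ℤ₂`-parity `π`:
`d [x,y] = (-1)^{[d][x]} x ∗ d y - (-1)^{[y]([d]+[x])} y ∗ d x`
(stated on homogeneous basis vectors). -/
def IsDerP (π : ZMod 2) (d : Tsns →ₗ[ℂ] T2) : Prop :=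
  ∀ i j : TIdx, d (brk (bs i) (bs j)) =
    sg π (parity i) • star2 (bs i) (d (bs j))
      - sg (parity j) (π + parity i) • star2 (bs j) (d (bs i))

/-- An even derivation `tsns → tsns ⊗ tsns`. -/
def IsDer2 (d : Tsns →ₗ[ℂ] T2) : Prop := IsDerP 0 d

/-- The special derivations `d^♮` on basis vectors (parameters `α, α†, β, β†`). -/
def dnatB (a a' b b' : ℂ) : TIdx → T2
  | .L n => (a * n) • Finsupp.single (.M 0, .M (2*n)) 1
      + (a' * n) • Finsupp.single (.M (2*n), .M 0) 1
  | .G k => (a * ((k : ℂ) + 1/2)) • Finsupp.single (.M 0, .M (2*k+1)) 1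
      + (a' * ((k : ℂ) + 1/2)) • Finsupp.single (.M (2*k+1), .M 0) 1
  | .Y k => b • Finsupp.single (.M 0, .Y k) 1 + b' • Finsupp.single (.Y k, .M 0) 1
  | .M k => (2*b) • Finsupp.single (.M 0, .M k) 1 + (2*b') • Finsupp.single (.M k, .M 0) 1

/-- The special derivations `d^♮ : tsns → tsns ⊗ tsns`. -/
def dnat (a a' b b' : ℂ) : Tsns →ₗ[ℂ] T2 :=
  Finsupp.lsum ℂ fun i => LinearMap.toSpanSingleton ℂ T2 (dnatB a a' b b' i)

/-- Multiplication by `(-1)^{σ·[u]}` on `tsns ⊗ tsns`. -/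
def twT2 (σ : ZMod 2) : T2 →ₗ[ℂ] T2 :=
  Finsupp.lsum ℂ fun p => LinearMap.toSpanSingleton ℂ T2
    (sg σ (parity p.1 + parity p.2) • Finsupp.single p 1)

/-- The coboundary `Δ_r (x) = (-1)^{[r][x]} x ∗ r`. -/
def Δr (r : T2) : Tsns →ₗ[ℂ] T2 :=
  Finsupp.lsum ℂ fun i => LinearMap.toSpanSingleton ℂ T2 (star2 (bs i) (twT2 (parity i) r))

/-- The embedding `tsns ⊗ (tsns ⊗ tsns) → tsns ⊗ tsns ⊗ tsns`. -/
def t13 : Tsns →ₗ[ℂ] T2 →ₗ[ℂ] T3 :=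
  Finsupp.lsum ℂ fun i => LinearMap.toSpanSingleton ℂ _
    (Finsupp.lsum ℂ fun q => LinearMap.toSpanSingleton ℂ T3 (Finsupp.single (i, q.1, q.2) 1))

/-- `1 ⊗ D : tsns ⊗ tsns → tsns ⊗ tsns ⊗ tsns` for an (even) linear map `D`. -/
def oneTensor (D : Tsns →ₗ[ℂ] T2) : T2 →ₗ[ℂ] T3 :=
  Finsupp.lsum ℂ fun p => LinearMap.toSpanSingleton ℂ T3 (t13 (bs p.1) (D (bs p.2)))

/-- The summand of `c(r)` coming from a pair of basis tensors
`p = a_i ⊗ b_i`, `q = a_j ⊗ b_j`. -/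
def cB (p q : TIdx × TIdx) : T3 :=
  sg (parity q.1) (parity p.2) • t3 (brIdx p.1 q.1) (bs p.2) (bs q.2)
    + t3 (bs p.1) (brIdx p.2 q.1) (bs q.2)
    + sg (parity q.1) (parity p.2) • t3 (bs p.1) (bs q.1) (brIdx p.2 q.2)

/-- `c` as a bilinear map. -/
def cY : T2 →ₗ[ℂ] T2 →ₗ[ℂ] T3 :=
  Finsupp.lsum ℂ fun p => LinearMap.toSpanSingleton ℂ _
    (Finsupp.lsum ℂ fun q => LinearMap.toSpanSingleton ℂ T3 (cB p q))

/-- `c(r) = [r¹²,r¹³] + [r¹²,r²³] + [r¹³,r²³]`. -/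
def cr (r : T2) : T3 := cY r r

/-- `(tsns, [·,·], D)` is a Lie superbialgebra: `Im D ⊆ Im(1⊗1−τ)`, the super
co-Jacobi identity holds, and `D` is a 1-cocycle. -/
def IsSuperBialg (D : Tsns →ₗ[ℂ] T2) : Prop :=
  (∀ x : Tsns, D x ∈ ImSkew) ∧
  (∀ x : Tsns,
    oneTensor D (D x) + xi (oneTensor D (D x)) + xi (xi (oneTensor D (D x))) = 0) ∧
  (∀ i j : TIdx, D (brk (bs i) (bs j)) =
    star2 (bs i) (D (bs j)) - sg (parity i) (parity j) • star2 (bs j) (D (bs i)))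

end

noncomputable section

/-- `i` is an index of the ideal `I = span{Y_p, M_p}`. -/
def isI : TIdx → Prop := fun i => (∃ k, i = TIdx.Y k) ∨ (∃ k, i = TIdx.M k)

/-- The submodule `H = tsns ⊗ I + I ⊗ tsns` of `tsns ⊗ tsns`. -/
def Hsub : Submodule ℂ T2 :=
  Submodule.span ℂ
    {x : T2 | ∃ p : TIdx × TIdx, (isI p.1 ∨ isI p.2) ∧ x = Finsupp.single p 1}

end

/- ======================= Auxiliary material for the proof ======================= -/

noncomputable section H0Aux
open TIdx

/-- The set of "ideal" pair indices. -/
def auxS0 : Set (TIdx × TIdx) := {p | isI p.1 ∨ isI p.2}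

lemma aux_Hsub_eq : Hsub = Finsupp.supported ℂ ℂ auxS0 := by
  rw [Finsupp.supported_eq_span_single, Hsub]
  congr 1
  ext x
  constructor
  · rintro ⟨p, hp, rfl⟩
    exact ⟨p, hp, rfl⟩
  · rintro ⟨p, hp, rfl⟩
    exact ⟨p, hp, rfl⟩

/-- The building block of `star2`. -/
def auxE (i : TIdx) (p : TIdx × TIdx) : T2 :=
  tp (brIdx i p.1) (bs p.2) + sg (parity i) (parity p.1) • tp (bs p.1) (brIdx i p.2)

lemma aux_tp_bs (s t : TIdx) : tp (bs s) (bs t) = Finsupp.single (s, t) 1 := by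
  simp only [tp, bs, Finsupp.lsum_single, LinearMap.toSpanSingleton_apply, one_smul]

lemma aux_star2_bs_apply (i : TIdx) (v : T2) (q : TIdx × TIdx) :
    (star2 (bs i) v) q = v.sum fun p c => c * auxE i p q := by
  rw [star2, bs, Finsupp.lsum_single, LinearMap.toSpanSingleton_apply, one_smul,
    Finsupp.lsum_apply, Finsupp.sum_apply]
  apply Finsupp.sum_congr
  intro p _
  rw [LinearMap.toSpanSingleton_apply, Finsupp.smul_apply, smul_eq_mul]
  rfl

lemma aux_sum_one (v : T2) (g : TIdx × TIdx → ℂ) (p1 : TIdx × TIdx)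
    (h0 : ∀ p, p ≠ p1 → g p = 0) :
    (v.sum fun p c => c * g p) = v p1 * g p1 := by
  classical
  have key : ∀ p c, c * g p = if p = p1 then c * g p1 else 0 := by
    intro p c
    by_cases h1 : p = p1
    · subst h1; rw [if_pos rfl]
    · rw [if_neg h1, h0 p h1, mul_zero]
  rw [Finsupp.sum_congr (g2 := fun p c => if p = p1 then c * g p1 else 0)
    (fun p _ => key p (v p)), Finsupp.sum_ite_eq']
  split_ifs with h
  · rfl
  · rw [Finsupp.notMem_support_iff.mp h, zero_mul]

lemma aux_sum_two (v : T2) (g : TIdx × TIdx → ℂ) (p1 p2 : TIdx × TIdx) (hne : p1 ≠ p2)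
    (h0 : ∀ p, p ≠ p1 → p ≠ p2 → g p = 0) :
    (v.sum fun p c => c * g p) = v p1 * g p1 + v p2 * g p2 := by
  classical
  have key : ∀ p c, c * g p =
      (if p = p1 then c * g p1 else 0) + (if p = p2 then c * g p2 else 0) := by
    intro p c
    by_cases h1 : p = p1
    · subst h1; rw [if_pos rfl, if_neg hne, add_zero]
    · by_cases h2 : p = p2
      · subst h2; rw [if_neg h1, if_pos rfl, zero_add]
      · rw [if_neg h1, if_neg h2, h0 p h1 h2, mul_zero, add_zero]
  rw [Finsupp.sum_congr
    (g2 := fun p c => (if p = p1 then c * g p1 else 0) + if p = p2 then c * g p2 else 0)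
    (fun p _ => key p (v p)), Finsupp.sum_add, Finsupp.sum_ite_eq', Finsupp.sum_ite_eq']
  have hcl : ∀ p : TIdx × TIdx, (if p ∈ v.support then v p * g p else 0) = v p * g p := by
    intro p
    split_ifs with h
    · rfl
    · rw [Finsupp.notMem_support_iff.mp h, zero_mul]
  rw [hcl, hcl]

open TIdx in
lemma aux_sg0 (b : ZMod 2) : sg 0 b = 1 := by
  have h : ¬((0:ZMod 2) = 1 ∧ b = 1) := by rintro ⟨h, -⟩; exact absurd h (by decide)
  rw [sg, if_neg h]

lemma aux_sg11 : sg 1 1 = -1 := by rw [sg, if_pos ⟨rfl, rfl⟩]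

lemma aux_sg10 : sg 1 0 = 1 := by
  rw [sg, if_neg]; rintro ⟨-, h⟩; exact absurd h (by decide)

open TIdx in
lemma aux_evLL (v : T2) (n a b : ℤ) (hn : n ≠ 0) :
    (star2 (bs (L n)) v) (L a, L b)
      = v (L (a - n), L b) * (((a - n : ℤ) : ℂ) - n)
        + v (L a, L (b - n)) * (((b - n : ℤ) : ℂ) - n) := by
  have hne : ((L (a - n), L b) : TIdx × TIdx) ≠ (L a, L (b - n)) := by
    simp only [ne_eq, Prod.mk.injEq, TIdx.L.injEq, not_and]
    intro h1; omega
  have h0 : ∀ p, p ≠ ((L (a - n), L b) : TIdx × TIdx) → p ≠ (L a, L (b - n)) →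
      auxE (L n) p (L a, L b) = 0 := by
    rintro ⟨m | m | m | m, r | r | r | r⟩ h1 h2 <;>
      simp only [ne_eq, Prod.mk.injEq, TIdx.L.injEq, not_and] at h1 h2 <;>
      simp [auxE, brIdx, aux_tp_bs, aux_sg0, parity, Finsupp.single_apply,
        Finsupp.add_apply, Finsupp.smul_apply, smul_eq_mul] <;>
      (try split_ifs) <;> first | rfl | (exfalso; omega) | simp [aux_tp_bs, Finsupp.single_apply] | omega
  have hval1 : auxE (L n) (L (a - n), L b) (L a, L b) = ((a - n : ℤ) : ℂ) - n := by
    simp [auxE, brIdx, aux_tp_bs, aux_sg0, parity, Finsupp.single_apply,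
      Finsupp.add_apply, Finsupp.smul_apply, smul_eq_mul,
      show n + (a - n) = a from by ring, show ¬(a - n = a) from by omega]
  have hval2 : auxE (L n) (L a, L (b - n)) (L a, L b) = ((b - n : ℤ) : ℂ) - n := by
    simp [auxE, brIdx, aux_tp_bs, aux_sg0, parity, Finsupp.single_apply,
      Finsupp.add_apply, Finsupp.smul_apply, smul_eq_mul,
      show n + (b - n) = b from by ring, show ¬(n + a = a) from by omega]
  rw [aux_star2_bs_apply, aux_sum_two v _ _ _ hne h0, hval1, hval2]

open TIdx in
lemma aux_evL0LL (v : T2) (a b : ℤ) :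
    (star2 (bs (L 0)) v) (L a, L b) = v (L a, L b) * ((a : ℂ) + b) := by
  have h0 : ∀ p, p ≠ ((L a, L b) : TIdx × TIdx) → auxE (L 0) p (L a, L b) = 0 := by
    rintro ⟨m | m | m | m, r | r | r | r⟩ h1 <;>
      simp only [ne_eq, Prod.mk.injEq, TIdx.L.injEq, not_and] at h1 <;>
      simp [auxE, brIdx, aux_tp_bs, aux_sg0, parity, Finsupp.single_apply,
        Finsupp.add_apply, Finsupp.smul_apply, smul_eq_mul] <;>
      (try split_ifs) <;> first | rfl | (exfalso; omega) | simp [aux_tp_bs, Finsupp.single_apply] | omega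
  have hval : auxE (L 0) (L a, L b) (L a, L b) = (a : ℂ) + b := by
    simp [auxE, brIdx, aux_tp_bs, aux_sg0, parity, Finsupp.single_apply,
      Finsupp.add_apply, Finsupp.smul_apply, smul_eq_mul]
    try ring
  rw [aux_star2_bs_apply, aux_sum_one v _ _ h0, hval]

open TIdx in
lemma aux_evL0LG (v : T2) (a b : ℤ) :
    (star2 (bs (L 0)) v) (L a, G b) = v (L a, G b) * ((a : ℂ) + b + 1/2) := by
  have h0 : ∀ p, p ≠ ((L a, G b) : TIdx × TIdx) → auxE (L 0) p (L a, G b) = 0 := by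
    rintro ⟨m | m | m | m, r | r | r | r⟩ h1 <;>
      simp only [ne_eq, Prod.mk.injEq, TIdx.L.injEq, TIdx.G.injEq, not_and] at h1 <;>
      simp [auxE, brIdx, aux_tp_bs, aux_sg0, parity, Finsupp.single_apply,
        Finsupp.add_apply, Finsupp.smul_apply, smul_eq_mul] <;>
      (try split_ifs) <;> first | rfl | (exfalso; omega) | simp [aux_tp_bs, Finsupp.single_apply] | omega
  have hval : auxE (L 0) (L a, G b) (L a, G b) = (a : ℂ) + b + 1/2 := by
    simp [auxE, brIdx, aux_tp_bs, aux_sg0, parity, Finsupp.single_apply,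
      Finsupp.add_apply, Finsupp.smul_apply, smul_eq_mul]
    try ring
  rw [aux_star2_bs_apply, aux_sum_one v _ _ h0, hval]

open TIdx in
lemma aux_evL0GL (v : T2) (a b : ℤ) :
    (star2 (bs (L 0)) v) (G a, L b) = v (G a, L b) * ((a : ℂ) + 1/2 + b) := by
  have h0 : ∀ p, p ≠ ((G a, L b) : TIdx × TIdx) → auxE (L 0) p (G a, L b) = 0 := by
    rintro ⟨m | m | m | m, r | r | r | r⟩ h1 <;>
      simp only [ne_eq, Prod.mk.injEq, TIdx.L.injEq, TIdx.G.injEq, not_and] at h1 <;>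
      simp [auxE, brIdx, aux_tp_bs, aux_sg0, parity, Finsupp.single_apply,
        Finsupp.add_apply, Finsupp.smul_apply, smul_eq_mul] <;>
      (try split_ifs) <;> first | rfl | (exfalso; omega) | simp [aux_tp_bs, Finsupp.single_apply] | omega
  have hval : auxE (L 0) (G a, L b) (G a, L b) = (a : ℂ) + 1/2 + b := by
    simp [auxE, brIdx, aux_tp_bs, aux_sg0, parity, Finsupp.single_apply,
      Finsupp.add_apply, Finsupp.smul_apply, smul_eq_mul]
    try ring
  rw [aux_star2_bs_apply, aux_sum_one v _ _ h0, hval]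

open TIdx in
lemma aux_evL0GG (v : T2) (a b : ℤ) :
    (star2 (bs (L 0)) v) (G a, G b) = v (G a, G b) * ((a : ℂ) + b + 1) := by
  have h0 : ∀ p, p ≠ ((G a, G b) : TIdx × TIdx) → auxE (L 0) p (G a, G b) = 0 := by
    rintro ⟨m | m | m | m, r | r | r | r⟩ h1 <;>
      simp only [ne_eq, Prod.mk.injEq, TIdx.G.injEq, not_and] at h1 <;>
      simp [auxE, brIdx, aux_tp_bs, aux_sg0, parity, Finsupp.single_apply,
        Finsupp.add_apply, Finsupp.smul_apply, smul_eq_mul] <;>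
      (try split_ifs) <;> first | rfl | (exfalso; omega) | simp [aux_tp_bs, Finsupp.single_apply] | omega
  have hval : auxE (L 0) (G a, G b) (G a, G b) = (a : ℂ) + b + 1 := by
    simp [auxE, brIdx, aux_tp_bs, aux_sg0, parity, Finsupp.single_apply,
      Finsupp.add_apply, Finsupp.smul_apply, smul_eq_mul]
    try ring
  rw [aux_star2_bs_apply, aux_sum_one v _ _ h0, hval]

open TIdx in
lemma aux_evG0 (v : T2) (k c : ℤ) :
    (star2 (bs (G 0)) v) (G k, L c)
      = v (L k, L c) * (((k : ℂ) - 1)/2) + v (G k, G (c - 1)) * (-2) := by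
  have hne : ((L k, L c) : TIdx × TIdx) ≠ (G k, G (c - 1)) := by simp
  have h0 : ∀ p, p ≠ ((L k, L c) : TIdx × TIdx) → p ≠ (G k, G (c - 1)) →
      auxE (G 0) p (G k, L c) = 0 := by
    rintro ⟨m | m | m | m, r | r | r | r⟩ h1 h2 <;>
      simp only [ne_eq, Prod.mk.injEq, TIdx.L.injEq, TIdx.G.injEq, not_and,
        reduceCtorEq, not_false_iff] at h1 h2 <;>
      simp [auxE, brIdx, aux_tp_bs, aux_sg0, aux_sg10, aux_sg11, parity, Finsupp.single_apply,
        Finsupp.add_apply, Finsupp.smul_apply, smul_eq_mul] <;>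
      (try split_ifs) <;> first | rfl | (exfalso; omega) | simp [aux_tp_bs, Finsupp.single_apply] | omega
  have hval1 : auxE (G 0) (L k, L c) (G k, L c) = ((k : ℂ) - 1)/2 := by
    simp [auxE, brIdx, aux_tp_bs, aux_sg10, parity, Finsupp.single_apply,
      Finsupp.add_apply, Finsupp.smul_apply, smul_eq_mul]
    try ring
  have hval2 : auxE (G 0) (G k, G (c - 1)) (G k, L c) = -2 := by
    simp [auxE, brIdx, aux_tp_bs, aux_sg11, parity, Finsupp.single_apply,
      Finsupp.add_apply, Finsupp.smul_apply, smul_eq_mul,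
      show 0 + (c - 1) + 1 = c from by ring]
    try ring
  rw [aux_star2_bs_apply, aux_sum_two v _ _ _ hne h0, hval1, hval2]


end H0Aux

/-- `H⁰(tsns, Q) = 0` for `Q = (tsns⊗tsns)/H`: any element of
`tsns ⊗ tsns` whose class in `Q` is annihilated by every `x ∈ tsns` lies in `H`. -/
theorem H0_of_quotient_is_zero (v : T2) (h : ∀ x : Tsns, star2 x v ∈ Hsub) :
    v ∈ Hsub := by
  classical
  have hz : ∀ (x : Tsns) (q : TIdx × TIdx), ¬ (isI q.1 ∨ isI q.2) → (star2 x v) q = 0 := by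
    intro x q hq
    have hx := h x
    rw [aux_Hsub_eq, Finsupp.mem_supported] at hx
    by_contra h0
    exact hq (hx (Finsupp.mem_support_iff.mpr h0))
  have hnsLL : ∀ a b : ℤ, ¬ (isI (TIdx.L a) ∨ isI (TIdx.L b)) := by simp [isI]
  have hnsLG : ∀ a b : ℤ, ¬ (isI (TIdx.L a) ∨ isI (TIdx.G b)) := by simp [isI]
  have hnsGL : ∀ a b : ℤ, ¬ (isI (TIdx.G a) ∨ isI (TIdx.L b)) := by simp [isI]
  have hnsGG : ∀ a b : ℤ, ¬ (isI (TIdx.G a) ∨ isI (TIdx.G b)) := by simp [isI]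
  -- the weight equations
  have eqLL : ∀ n a b : ℤ, n ≠ 0 →
      v (TIdx.L (a - n), TIdx.L b) * (((a - n : ℤ) : ℂ) - n)
        + v (TIdx.L a, TIdx.L (b - n)) * (((b - n : ℤ) : ℂ) - n) = 0 := by
    intro n a b hn
    rw [← aux_evLL v n a b hn]
    exact hz _ _ (hnsLL a b)
  have eqL0LL : ∀ a b : ℤ, v (TIdx.L a, TIdx.L b) * ((a : ℂ) + b) = 0 := by
    intro a b; rw [← aux_evL0LL v a b]; exact hz _ _ (hnsLL a b)
  have eqL0LG : ∀ a b : ℤ, v (TIdx.L a, TIdx.G b) * ((a : ℂ) + b + 1/2) = 0 := by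
    intro a b; rw [← aux_evL0LG v a b]; exact hz _ _ (hnsLG a b)
  have eqL0GL : ∀ a b : ℤ, v (TIdx.G a, TIdx.L b) * ((a : ℂ) + 1/2 + b) = 0 := by
    intro a b; rw [← aux_evL0GL v a b]; exact hz _ _ (hnsGL a b)
  have eqL0GG : ∀ a b : ℤ, v (TIdx.G a, TIdx.G b) * ((a : ℂ) + b + 1) = 0 := by
    intro a b; rw [← aux_evL0GG v a b]; exact hz _ _ (hnsGG a b)
  have eqG0 : ∀ k c : ℤ,
      v (TIdx.L k, TIdx.L c) * (((k : ℂ) - 1)/2) + v (TIdx.G k, TIdx.G (c - 1)) * (-2) = 0 := by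
    intro k c; rw [← aux_evG0 v k c]; exact hz _ _ (hnsGL k c)
  -- the diagonal L-coefficients vanish
  have hA2 : ∀ n : ℤ, n ≠ 0 → v (TIdx.L (2 * n), TIdx.L (-(2 * n))) = 0 := by
    intro n hn
    have H := eqLL n (2 * n) (-n) hn
    have e1 : 2 * n - n = n := by ring
    have e2 : (-n : ℤ) - n = -(2 * n) := by ring
    rw [e1, e2] at H
    have hv : v (TIdx.L (2 * n), TIdx.L (-(2 * n))) * (-3 * (n : ℂ)) = 0 := by
      linear_combination (norm := (push_cast; ring1)) H
    have hc : (-3 * (n : ℂ)) ≠ 0 :=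
      mul_ne_zero (by norm_num) (Int.cast_ne_zero.mpr hn)
    exact (mul_eq_zero.mp hv).resolve_right hc
  have hA0n : ∀ n : ℤ, n ≠ 0 →
      v (TIdx.L 0, TIdx.L 0) * (-(n : ℂ)) + v (TIdx.L n, TIdx.L (-n)) * (-2 * (n : ℂ)) = 0 := by
    intro n hn
    have H := eqLL n n 0 hn
    have e1 : n - n = 0 := by ring
    have e2 : (0 : ℤ) - n = -n := by ring
    rw [e1, e2] at H
    linear_combination (norm := (push_cast; ring1)) H
  have hA0 : v (TIdx.L 0, TIdx.L 0) = 0 := by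
    have H := hA0n 2 (by norm_num)
    have h4 : v (TIdx.L 2, TIdx.L (-2)) = 0 := by
      have h2 := hA2 1 (by norm_num)
      norm_num at h2
      exact h2
    rw [h4] at H
    have hv : v (TIdx.L 0, TIdx.L 0) * (-2 : ℂ) = 0 := by
      linear_combination (norm := (push_cast; ring1)) H
    have hc : (-2 : ℂ) ≠ 0 := by norm_num
    exact (mul_eq_zero.mp hv).resolve_right hc
  have hA : ∀ m : ℤ, v (TIdx.L m, TIdx.L (-m)) = 0 := by
    intro m
    by_cases hm : m = 0
    · subst hm; simpa using hA0
    · have H := hA0n m hm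
      rw [hA0] at H
      have hv : v (TIdx.L m, TIdx.L (-m)) * (-2 * (m : ℂ)) = 0 := by
        linear_combination (norm := (push_cast; ring1)) H
      have hc : (-2 * (m : ℂ)) ≠ 0 :=
        mul_ne_zero (by norm_num) (Int.cast_ne_zero.mpr hm)
      exact (mul_eq_zero.mp hv).resolve_right hc
  -- the main argument
  rw [aux_Hsub_eq, Finsupp.mem_supported]
  intro q hq
  rcases q with ⟨i, j⟩
  have hvq : v (i, j) ≠ 0 := Finsupp.mem_support_iff.mp hq
  by_contra hS
  apply hvq
  have hS' : ¬ (isI i ∨ isI j) := hS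
  clear hq hS
  rcases i with a | a | a | a <;> rcases j with b | b | b | b <;>
    simp only [isI, not_or] at hS' <;>
    try simp at hS'
  -- remaining: (L,L), (L,G), (G,L), (G,G)
  · -- (L a, L b)
    by_cases hab : a + b = 0
    · have hb : b = -a := by omega
      rw [hb]
      exact hA a
    · have hc : ((a : ℂ) + b) ≠ 0 := by
        intro hc0
        apply hab
        have : ((a + b : ℤ) : ℂ) = 0 := by push_cast; linear_combination hc0
        exact_mod_cast this
      exact (mul_eq_zero.mp (eqL0LL a b)).resolve_right hc
  · -- (L a, G b)
    have hc : ((a : ℂ) + b + 1/2) ≠ 0 := by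
      intro hc0
      have h2 : ((2 * a + 2 * b + 1 : ℤ) : ℂ) = 0 := by
        push_cast; linear_combination 2 * hc0
      have : (2 * a + 2 * b + 1 : ℤ) = 0 := by exact_mod_cast h2
      omega
    exact (mul_eq_zero.mp (eqL0LG a b)).resolve_right hc
  · -- (G a, L b)
    have hc : ((a : ℂ) + 1/2 + b) ≠ 0 := by
      intro hc0
      have h2 : ((2 * a + 2 * b + 1 : ℤ) : ℂ) = 0 := by
        push_cast; linear_combination 2 * hc0
      have : (2 * a + 2 * b + 1 : ℤ) = 0 := by exact_mod_cast h2
      omega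
    exact (mul_eq_zero.mp (eqL0GL a b)).resolve_right hc
  · -- (G a, G b)
    by_cases hab : a + b + 1 = 0
    · have hb : b = -a - 1 := by omega
      rw [hb]
      have H := eqG0 a (-a)
      rw [hA a] at H
      have hv : v (TIdx.G a, TIdx.G (-a - 1)) * (-2 : ℂ) = 0 := by
        linear_combination (norm := (push_cast; ring1)) H
      exact (mul_eq_zero.mp hv).resolve_right (by norm_num)
    · have hc : ((a : ℂ) + b + 1) ≠ 0 := by
        intro hc0
        apply hab
        have : ((a + b + 1 : ℤ) : ℂ) = 0 := by push_cast; linear_combination hc0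
        exact_mod_cast this
      exact (mul_eq_zero.mp (eqL0GG a b)).resolve_right hc
end

section
/- There are no nonzero tsns/I-equivariant linear maps from I/[I,I]-type data into ns⊗ns arising as restrictions: specifically, Hom_{U(ns)}(I, ns⊗ns) = 0, i.e. every ns-module homomorphism from the ideal I (with the ns-action induced from the adjoint action of tsns) to ns⊗ns (adjoint diagonal action) is zero. -/
open Finsupp

/-- Basis indices of the `N = 1` Neveu–Schwarz algebra: `L n` is `L_n`,
`G k` is `G_{k+1/2}`. -/
inductive NIdx : Type
  | L : ℤ → NIdx
  | G : ℤ → NIdx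
  deriving DecidableEq

noncomputable section

/-- The underlying vector space of the Neveu–Schwarz algebra `ns`. -/
abbrev Ns : Type := NIdx →₀ ℂ

/-- Basis vectors of `ns`. -/
def nbs (i : NIdx) : Ns := Finsupp.single i 1

/-- The bracket of `ns` on basis vectors. -/
def nbrIdx : NIdx → NIdx → Ns
  | .L n, .L m => ((m : ℂ) - n) • nbs (.L (n + m))
  | .L n, .G k => ((k : ℂ) + 1/2 - n/2) • nbs (.G (k + n))
  | .G k, .L n => (-((k : ℂ) + 1/2 - n/2)) • nbs (.G (k + n))
  | .G k, .G l => (2 : ℂ) • nbs (.L (k + l + 1))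

/-- The bracket of `ns` as a bilinear map. -/
def nbrk : Ns →ₗ[ℂ] Ns →ₗ[ℂ] Ns :=
  Finsupp.lsum ℂ fun i => LinearMap.toSpanSingleton ℂ _
    (Finsupp.lsum ℂ fun j => LinearMap.toSpanSingleton ℂ Ns (nbrIdx i j))

end

/-- Basis indices of the ideal `I`: `Y k` is `Y_{k/2}`, `M k` is `M_{k/2}`. -/
inductive IIdx : Type
  | Y : ℤ → IIdx
  | M : ℤ → IIdx
  deriving DecidableEq

noncomputable section

/-- The ideal `I` as an abstract vector space. -/
abbrev Imod : Type := IIdx →₀ ℂ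

/-- The tensor square `ns ⊗ ns`. -/
abbrev N2 : Type := (NIdx × NIdx) →₀ ℂ

/-- Basis vectors of `I`. -/
def ibs (i : IIdx) : Imod := Finsupp.single i 1

/-- Parity of basis vectors of `ns`. -/
def nparity : NIdx → ZMod 2
  | .L _ => 0
  | .G _ => 1

/-- The action of `ns` on `I` (induced by the adjoint action of `tsns`), on basis
vectors. -/
def nactB : NIdx → IIdx → Imod
  | .L n, .Y k => (if (k : ZMod 2) = 0 then ((k : ℂ) - n)/2 else (k : ℂ)/2) • ibs (.Y (k + 2*n))
  | .L n, .M k => (if (k : ZMod 2) = 0 then (k : ℂ)/2 else ((k : ℂ) + n)/2) • ibs (.M (k + 2*n))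
  | .G l, .Y k => (if (k : ZMod 2) = 0 then ((k : ℂ) - 2*l - 1)/4 else 2) • ibs (.Y (k + 2*l + 1))
  | .G l, .M k => (if (k : ZMod 2) = 0 then (k : ℂ)/4 else 2) • ibs (.M (k + 2*l + 1))

/-- The action of `ns` on `I`, as a bilinear map. -/
def nact : Ns →ₗ[ℂ] Imod →ₗ[ℂ] Imod :=
  Finsupp.lsum ℂ fun i => LinearMap.toSpanSingleton ℂ _
    (Finsupp.lsum ℂ fun j => LinearMap.toSpanSingleton ℂ Imod (nactB i j))

/-- The tensor product map `ns × ns → ns ⊗ ns`. -/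
def ntp : Ns →ₗ[ℂ] Ns →ₗ[ℂ] N2 :=
  Finsupp.lsum ℂ fun i => LinearMap.toSpanSingleton ℂ _
    (Finsupp.lsum ℂ fun j => LinearMap.toSpanSingleton ℂ N2 (Finsupp.single (i, j) 1))

/-- The adjoint diagonal action of `ns` on `ns ⊗ ns`. -/
def nstar2 : Ns →ₗ[ℂ] N2 →ₗ[ℂ] N2 :=
  Finsupp.lsum ℂ fun i => LinearMap.toSpanSingleton ℂ _
    (Finsupp.lsum ℂ fun p => LinearMap.toSpanSingleton ℂ N2
      (ntp (nbrIdx i p.1) (nbs p.2)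
        + (if nparity i = 1 ∧ nparity p.1 = 1 then (-1 : ℂ) else 1) •
            ntp (nbs p.1) (nbrIdx i p.2)))

end

noncomputable section

def nact_single (i : NIdx) (i0 : IIdx) : nact (nbs i) (ibs i0) = nactB i i0 := by
  simp [nact, nbs, ibs, Finsupp.lsum_single, LinearMap.toSpanSingleton_apply]

lemma ntp_nbs (i j : NIdx) : ntp (nbs i) (nbs j) = Finsupp.single (i,j) 1 := by
  simp [ntp, nbs, Finsupp.lsum_single, LinearMap.toSpanSingleton_apply]

lemma nstar2_single (i : NIdx) (p : NIdx × NIdx) :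
    nstar2 (nbs i) (Finsupp.single p 1) =
      ntp (nbrIdx i p.1) (nbs p.2)
        + (if nparity i = 1 ∧ nparity p.1 = 1 then (-1 : ℂ) else 1) •
            ntp (nbs p.1) (nbrIdx i p.2) := by
  simp [nstar2, nbs, Finsupp.lsum_single, LinearMap.toSpanSingleton_apply]

/-- index of a basis vector -/
def mdx : NIdx → ℤ | .L a => a | .G b => b

/-- shift -/
def shiftN (n : ℤ) : NIdx → NIdx | .L a => .L (a+n) | .G b => .G (b+n)

/-- coefficient of L_n action -/
def cL (n : ℤ) : NIdx → ℂ | .L a => a - n | .G b => b + 1/2 - n/2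

lemma mdx_shift (n : ℤ) (i : NIdx) : mdx (shiftN n i) = mdx i + n := by
  cases i <;> rfl

lemma shift_shift (n : ℤ) (i : NIdx) : shiftN (-n) (shiftN n i) = i := by
  cases i <;> simp [shiftN]

lemma brL (n : ℤ) (i : NIdx) : nbrIdx (.L n) i = cL n i • nbs (shiftN n i) := by
  cases i with
  | L a => show ((a:ℂ) - n) • nbs (.L (n+a)) = _ ; rw [add_comm] ; rfl
  | G b => rfl

lemma Lact_single (n : ℤ) (p : NIdx × NIdx) :
    nstar2 (nbs (.L n)) (Finsupp.single p 1) =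
      cL n p.1 • Finsupp.single (shiftN n p.1, p.2) 1
        + cL n p.2 • Finsupp.single (p.1, shiftN n p.2) 1 := by
  rw [nstar2_single, brL, brL]
  have h : ¬ (nparity (.L n) = 1 ∧ nparity p.1 = 1) := by
    simp [nparity]
  rw [if_neg h]
  simp [map_smul, LinearMap.smul_apply, ntp_nbs]

def Dg (n : ℤ) (p : NIdx × NIdx) : ℂ :=
  cL n p.1 * cL (-n) (shiftN n p.1) + cL n p.2 * cL (-n) (shiftN n p.2)

lemma LL_single (n : ℤ) (p : NIdx × NIdx) :
    nstar2 (nbs (.L (-n))) (nstar2 (nbs (.L n)) (Finsupp.single p 1)) =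
      Dg n p • Finsupp.single p 1
        + (cL n p.1 * cL (-n) p.2) • Finsupp.single (shiftN n p.1, shiftN (-n) p.2) 1
        + (cL n p.2 * cL (-n) p.1) • Finsupp.single (shiftN (-n) p.1, shiftN n p.2) 1 := by
  rw [Lact_single, map_add, map_smul, map_smul, Lact_single, Lact_single]
  simp only [shift_shift, Dg]
  match p with
  | (i, j) => simp only []; module

end

noncomputable section

def sNI : NIdx → ℂ | .L _ => -4 | .G _ => -3/2

lemma phi_diff (n : ℤ) (i : NIdx) :
    cL (n+2) i * cL (-(n+2)) (shiftN (n+2) i)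
      - 2*(cL (n+1) i * cL (-(n+1)) (shiftN (n+1) i))
      + cL n i * cL (-n) (shiftN n i) = sNI i := by
  cases i <;> simp only [cL, shiftN, sNI] <;> push_cast <;> ring

lemma T_single_apply (n : ℤ) (q r : NIdx × NIdx) (c : ℂ) :
    (nstar2 (nbs (.L (-n))) (nstar2 (nbs (.L n)) (Finsupp.single q c))) r =
      c * ((if q = r then Dg n q else 0)
        + (if (shiftN n q.1, shiftN (-n) q.2) = r then cL n q.1 * cL (-n) q.2 else 0)
        + (if (shiftN (-n) q.1, shiftN n q.2) = r then cL n q.2 * cL (-n) q.1 else 0)) := by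
  have h1 : Finsupp.single q c = c • Finsupp.single q 1 := by
    simp [Finsupp.smul_single]
  rw [h1, map_smul, map_smul, LL_single]
  simp only [Finsupp.smul_apply, Finsupp.add_apply, Finsupp.single_apply, smul_eq_mul]
  split_ifs <;> ring

lemma T_apply (n : ℤ) (v : N2) (r : NIdx × NIdx) :
    (nstar2 (nbs (.L (-n))) (nstar2 (nbs (.L n)) v)) r =
      ∑ q ∈ v.support,
        (nstar2 (nbs (.L (-n))) (nstar2 (nbs (.L n)) (Finsupp.single q (v q)))) r := by
  conv_lhs => rw [← Finsupp.sum_single v]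
  rw [map_finsuppSum, map_finsuppSum, Finsupp.sum_apply]
  rfl

lemma kill (v : N2) (lam : ℤ → ℂ) (δ : ℂ)
    (h : ∀ n : ℤ, nstar2 (nbs (.L (-n))) (nstar2 (nbs (.L n)) v) = lam n • v)
    (hd : ∀ n : ℤ, lam (n+2) - 2 * lam (n+1) + lam n = δ)
    (h8 : δ ≠ -8) (h11 : δ ≠ -11/2) (h3 : δ ≠ -3) : v = 0 := by
  by_contra hv
  obtain ⟨r, hr⟩ : ∃ r, v r ≠ 0 := by
    by_contra hc
    push_neg at hc
    exact hv (Finsupp.ext hc)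
  have hrS : r ∈ v.support := Finsupp.mem_support_iff.mpr hr
  set S := v.support with hS
  set B : ℕ := S.sup fun p => (mdx p.1).natAbs ⊔ (mdx p.2).natAbs with hBdef
  have hB : ∀ p ∈ S, (mdx p.1).natAbs ≤ B ∧ (mdx p.2).natAbs ≤ B := by
    intro p hp
    have hle : (mdx p.1).natAbs ⊔ (mdx p.2).natAbs ≤ B :=
      Finset.le_sup (f := fun p => (mdx p.1).natAbs ⊔ (mdx p.2).natAbs) hp
    exact ⟨le_trans (le_max_left _ _) hle, le_trans (le_max_right _ _) hle⟩
  have E : ∀ n : ℤ, 2*(B:ℤ) < n → Dg n r * v r = lam n * v r := by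
    intro n hn
    have e1 := DFunLike.congr_fun (h n) r
    rw [T_apply] at e1
    have hmain : ∀ q ∈ S, q ≠ r →
        (nstar2 (nbs (.L (-n))) (nstar2 (nbs (.L n)) (Finsupp.single q (v q)))) r = 0 := by
      intro q hq hqr
      rw [T_single_apply]
      have c1 : ¬ ((shiftN n q.1, shiftN (-n) q.2) = r) := by
        intro heq
        have h1 : shiftN n q.1 = r.1 := congrArg Prod.fst heq
        have h2 := congrArg mdx h1
        rw [mdx_shift] at h2
        have b1 := (hB q hq).1
        have b2 := (hB r hrS).1
        omega
      have c2 : ¬ ((shiftN (-n) q.1, shiftN n q.2) = r) := by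
        intro heq
        have h1 : shiftN (-n) q.1 = r.1 := congrArg Prod.fst heq
        have h2 := congrArg mdx h1
        rw [mdx_shift] at h2
        have b1 := (hB q hq).1
        have b2 := (hB r hrS).1
        omega
      rw [if_neg hqr, if_neg c1, if_neg c2]
      ring
    have hsum : ∑ q ∈ S,
        (nstar2 (nbs (.L (-n))) (nstar2 (nbs (.L n)) (Finsupp.single q (v q)))) r
        = (nstar2 (nbs (.L (-n))) (nstar2 (nbs (.L n)) (Finsupp.single r (v r)))) r :=
      Finset.sum_eq_single r hmain (fun hnr => absurd hrS hnr)
    rw [hsum, T_single_apply] at e1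
    have c1 : ¬ ((shiftN n r.1, shiftN (-n) r.2) = r) := by
      intro heq
      have h1 : shiftN n r.1 = r.1 := congrArg Prod.fst heq
      have h2 := congrArg mdx h1
      rw [mdx_shift] at h2
      omega
    have c2 : ¬ ((shiftN (-n) r.1, shiftN n r.2) = r) := by
      intro heq
      have h1 : shiftN (-n) r.1 = r.1 := congrArg Prod.fst heq
      have h2 := congrArg mdx h1
      rw [mdx_shift] at h2
      omega
    rw [if_pos rfl, if_neg c1, if_neg c2, Finsupp.smul_apply, smul_eq_mul] at e1
    linear_combination e1
  set n0 : ℤ := 2*(B:ℤ)+1 with hn0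
  have e0 := E n0 (by omega)
  have ea := E (n0+1) (by omega)
  have eb := E (n0+2) (by omega)
  have sd : Dg (n0+2) r - 2*Dg (n0+1) r + Dg n0 r = sNI r.1 + sNI r.2 := by
    have h1 := phi_diff n0 r.1
    have h2 := phi_diff n0 r.2
    unfold Dg
    linear_combination h1 + h2
  have t1 : (sNI r.1 + sNI r.2) * v r = δ * v r := by
    linear_combination eb - 2*ea + e0 - v r * sd + v r * hd n0
  have hne : sNI r.1 + sNI r.2 - δ ≠ 0 := by
    have hcases : sNI r.1 + sNI r.2 = -8 ∨ sNI r.1 + sNI r.2 = -11/2 ∨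
        sNI r.1 + sNI r.2 = -3 := by
      rcases r with ⟨i, j⟩
      cases i <;> cases j <;> simp [sNI] <;> norm_num
    rcases hcases with hcc | hcc | hcc <;> rw [hcc] <;> intro hc
    · exact h8 (by linear_combination -hc)
    · exact h11 (by linear_combination -hc)
    · exact h3 (by linear_combination -hc)
  have hfin : (sNI r.1 + sNI r.2 - δ) * v r = 0 := by linear_combination t1
  exact hr ((mul_eq_zero.mp hfin).resolve_left hne)

end

lemma odd_cast (m : ℤ) : ((2*m+1 : ℤ) : ZMod 2) ≠ 0 := by
  intro h
  have h1 : ((2*m+1 : ℤ) : ZMod 2) = 1 := by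
    push_cast
    rw [show ((2:ZMod 2)) = 0 by decide]
    ring
  rw [h1] at h
  exact one_ne_zero h

theorem aux_hom_I_zero (f : Imod →ₗ[ℂ] N2)
    (hf : ∀ (j : NIdx) (w : Imod), f (nact (nbs j) w) = nstar2 (nbs j) (f w)) :
    f = 0 := by
  have hf' : ∀ (j : NIdx) (i0 : IIdx), f (nactB j i0) = nstar2 (nbs j) (f (ibs i0)) := by
    intro j i0
    rw [← nact_single, hf]
  have h1 : ∀ (n m k : ℤ), k = 2*m+1 →
      nstar2 (nbs (.L n)) (f (ibs (.Y k))) = (((k:ℂ))/2) • f (ibs (.Y (k+2*n))) := by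
    intro n m k hk
    rw [← hf']
    have hb : nactB (.L n) (.Y k) = (((k:ℂ))/2) • ibs (.Y (k+2*n)) := by
      simp only [nactB]
      rw [if_neg (by rw [hk]; exact odd_cast m)]
    rw [hb, map_smul]
  have h1M : ∀ (n m k : ℤ), k = 2*m+1 →
      nstar2 (nbs (.L n)) (f (ibs (.M k))) = (((k:ℂ)+n)/2) • f (ibs (.M (k+2*n))) := by
    intro n m k hk
    rw [← hf']
    have hb : nactB (.L n) (.M k) = (((k:ℂ)+n)/2) • ibs (.M (k+2*n)) := by
      simp only [nactB]
      rw [if_neg (by rw [hk]; exact odd_cast m)]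
    rw [hb, map_smul]
  have hGY : ∀ (l : ℤ), nstar2 (nbs (.G l)) (f (ibs (.Y 1))) = (2:ℂ) • f (ibs (.Y (1+2*l+1))) := by
    intro l
    rw [← hf']
    have hb : nactB (.G l) (.Y 1) = (2:ℂ) • ibs (.Y (1+2*l+1)) := by
      simp only [nactB]
      rw [if_neg (by exact_mod_cast odd_cast 0)]
    rw [hb, map_smul]
  have hGM : ∀ (l : ℤ), nstar2 (nbs (.G l)) (f (ibs (.M 1))) = (2:ℂ) • f (ibs (.M (1+2*l+1))) := by
    intro l
    rw [← hf']
    have hb : nactB (.G l) (.M 1) = (2:ℂ) • ibs (.M (1+2*l+1)) := by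
      simp only [nactB]
      rw [if_neg (by exact_mod_cast odd_cast 0)]
    rw [hb, map_smul]
  -- kill f(Y 1)
  have hvY : f (ibs (.Y 1)) = 0 := by
    apply kill _ (fun n : ℤ => (2*(n:ℂ)+1)/4) 0
    · intro n
      have a1 := h1 n 0 1 (by ring)
      have a2 := h1 (-n) n (1+2*n) (by ring)
      rw [show (1:ℤ)+2*n+2*(-n) = 1 by ring] at a2
      rw [a1, map_smul, a2, smul_smul]
      congr 1
      push_cast
      ring
    · intro n; push_cast; ring
    · norm_num
    · norm_num
    · norm_num
  -- kill f(M 1)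
  have hvM : f (ibs (.M 1)) = 0 := by
    apply kill _ (fun n : ℤ => ((n:ℂ)+1)^2/4) (1/2)
    · intro n
      have a1 := h1M n 0 1 (by ring)
      have a2 := h1M (-n) n (1+2*n) (by ring)
      rw [show (1:ℤ)+2*n+2*(-n) = 1 by ring] at a2
      rw [a1, map_smul, a2, smul_smul]
      congr 1
      push_cast
      ring
    · intro n; push_cast; ring
    · norm_num
    · norm_num
    · norm_num
  -- all Y values vanish
  have hYodd : ∀ n : ℤ, f (ibs (.Y (1+2*n))) = 0 := by
    intro n
    have a1 := h1 n 0 1 (by ring)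
    rw [hvY, map_zero] at a1
    have h2 : (((1:ℤ):ℂ)/2) ≠ 0 := by norm_num
    exact (smul_eq_zero.mp a1.symm).resolve_left h2
  have hYeven : ∀ l : ℤ, f (ibs (.Y (1+2*l+1))) = 0 := by
    intro l
    have a1 := hGY l
    rw [hvY, map_zero] at a1
    exact (smul_eq_zero.mp a1.symm).resolve_left (by norm_num)
  have hY : ∀ k : ℤ, f (ibs (.Y k)) = 0 := by
    intro k
    rcases Int.even_or_odd k with ⟨m, hm⟩ | ⟨m, hm⟩
    · have := hYeven (m-1)
      rw [show (1:ℤ)+2*(m-1)+1 = m+m by ring, ← hm] at this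
      exact this
    · have := hYodd m
      rw [show (1:ℤ)+2*m = 2*m+1 by ring, ← hm] at this
      exact this
  -- all M values vanish
  have hModd : ∀ n : ℤ, n ≠ -1 → f (ibs (.M (1+2*n))) = 0 := by
    intro n hn
    have a1 := h1M n 0 1 (by ring)
    rw [hvM, map_zero] at a1
    have h2 : (((1:ℤ):ℂ)+(n:ℂ))/2 ≠ 0 := by
      have : ((1:ℤ):ℂ)+(n:ℂ) = ((1+n : ℤ) : ℂ) := by push_cast; ring
      rw [this]
      simp only [ne_eq, div_eq_zero_iff]
      push_neg
      constructor
      · exact_mod_cast (by omega : (1:ℤ)+n ≠ 0)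
      · norm_num
    exact (smul_eq_zero.mp a1.symm).resolve_left h2
  have hM3 : f (ibs (.M 3)) = 0 := by
    have := hModd 1 (by norm_num)
    rwa [show (1:ℤ)+2*1 = 3 by ring] at this
  have hMm1 : f (ibs (.M (-1))) = 0 := by
    have a1 := h1M (-2) 1 3 (by ring)
    rw [hM3, map_zero, show (3:ℤ)+2*(-2) = -1 by ring] at a1
    have h2 : (((3:ℤ):ℂ)+((-2:ℤ):ℂ))/2 ≠ 0 := by norm_num
    exact (smul_eq_zero.mp a1.symm).resolve_left h2
  have hMeven : ∀ l : ℤ, f (ibs (.M (1+2*l+1))) = 0 := by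
    intro l
    have a1 := hGM l
    rw [hvM, map_zero] at a1
    exact (smul_eq_zero.mp a1.symm).resolve_left (by norm_num)
  have hM : ∀ k : ℤ, f (ibs (.M k)) = 0 := by
    intro k
    rcases Int.even_or_odd k with ⟨m, hm⟩ | ⟨m, hm⟩
    · have := hMeven (m-1)
      rw [show (1:ℤ)+2*(m-1)+1 = m+m by ring, ← hm] at this
      exact this
    · by_cases hk : m = -1
      · rw [hm, hk]
        exact_mod_cast hMm1
      · have := hModd m hk
        rw [show (1:ℤ)+2*m = 2*m+1 by ring, ← hm] at this
        exact this
  -- conclude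
  apply Finsupp.lhom_ext
  intro a b
  have hb : (Finsupp.single a b : Imod) = b • ibs a := by
    simp [ibs, Finsupp.smul_single]
  rw [hb, map_smul]
  cases a with
  | Y k => rw [hY k]; simp
  | M k => rw [hM k]; simp

/-- `Hom_{U(ns)}(I, ns ⊗ ns) = 0`: every `ns`-equivariant linear map
from the ideal `I` (with the action induced by the adjoint action of `tsns`) to
`ns ⊗ ns` (adjoint diagonal action) is zero. -/
theorem hom_I_to_ns_tensor_is_zero (f : Imod →ₗ[ℂ] N2)
    (hf : ∀ (j : NIdx) (w : Imod), f (nact (nbs j) w) = nstar2 (nbs j) (f w)) :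
    f = 0 := by
  exact aux_hom_I_zero f hf
end
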